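/- arXiv:2112.06092 — 4 statements merged into one kernel-verified Lean document; each statement's English description precedes it below -/
import Mathlib

section
/- Let L : X → Y be a morphism in a 2-category (or bicategory) with right adjoint R such that the counit LR → id_Y is invertible. If f : U → Y is a morphism, p : U → V is a morphism, and Rf admits a left Kan extension p_!(Rf) along p, then L ∘ p_!(Rf) is a left Kan extension of f ≅ LRf along p. -/
open CategoryTheory Bicategory

universe w v u

/-- If `L ⊣ R` with invertible counit, and `R ∘ f` admits a left Kan
extension `t` along `p`, then `L ∘ t.extension` is a left Kan extension of
`f ≅ L ∘ R ∘ f` along `p`. -/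
theorem leftKan_whisker_leftAdjoint_of_isIso_counit
    {B : Type u} [Bicategory.{w, v} B] {X Y U V : B}
    (L : X ⟶ Y) (R : Y ⟶ X) (adj : Bicategory.Adjunction L R) [IsIso adj.counit]
    (f : U ⟶ Y) (p : U ⟶ V) (t : LeftExtension p (f ≫ R)) (ht : t.IsKan) :
    Nonempty ((LeftExtension.mk (t.extension ≫ L)
      ((ρ_ f).inv ≫ f ◁ inv adj.counit ≫ (α_ f R L).inv ≫ t.unit ▷ L ≫
        (α_ p t.extension L).hom)).IsKan) := by
  have K : (t.whisker L).IsKan := LeftExtension.isKanOfWhiskerLeftAdjoint ht adj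
  set φ : f ⟶ (f ≫ R) ≫ L :=
    (ρ_ f).inv ≫ f ◁ inv adj.counit ≫ (α_ f R L).inv with hφ
  have hφiso : IsIso φ := by infer_instance
  -- the target extension's unit is `φ ≫ (t.whisker L).unit`
  have hunit : ((ρ_ f).inv ≫ f ◁ inv adj.counit ≫ (α_ f R L).inv ≫ t.unit ▷ L ≫
      (α_ p t.extension L).hom) = φ ≫ (t.whisker L).unit := by
    simp [hφ]
  refine ⟨LeftExtension.IsKan.mk (fun s ↦ ?_) (fun s τ ↦ ?_)⟩
  · refine LeftExtension.homMk
      (K.desc (LeftExtension.mk s.extension (inv φ ≫ s.unit))) ?_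
    dsimp only [LeftExtension.mk, StructuredArrow.mk_right, StructuredArrow.mk_hom_eq_self]
    rw [hunit]
    change (φ ≫ (t.whisker L).unit) ≫ _ = _
    refine (Category.assoc _ _ _).trans ?_
    refine (congrArg (φ ≫ ·) (K.fac _)).trans ?_
    exact IsIso.hom_inv_id_assoc φ s.unit
  · ext
    apply K.hom_ext
    change _ = (t.whisker L).unit ≫ p ◁ K.desc (LeftExtension.mk s.extension (inv φ ≫ s.unit))
    refine Eq.trans ?_ (K.fac _).symm
    dsimp only [LeftExtension.mk, StructuredArrow.homMk_right, StructuredArrow.mk_right,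
      StructuredArrow.mk_hom_eq_self]
    have := LeftExtension.w τ
    dsimp only [LeftExtension.mk, StructuredArrow.mk_right,
      StructuredArrow.mk_hom_eq_self] at this
    have h2 : (φ ≫ (t.whisker L).unit) ≫ p ◁ τ.right = s.unit := by
      rw [← hunit]; exact this
    change _ = inv φ ≫ s.unit
    rw [← h2]; simp only [Category.assoc, IsIso.inv_hom_id_assoc]
end

section
/- Let R : X → Y be a morphism in a 2-category, and suppose L : Y → X is a left Kan extension of id_X along R such that the unit 2-cell id_X → L ∘ R is invertible. If moreover id_Y is a left Kan extension of R along R, then L is left adjoint to R with invertible counit given by the inverse of the 2-cell id_X → LR. -/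
open CategoryTheory Bicategory

universe w v u

/-- If `L = t.extension` is a left Kan extension of `𝟙 X` along `R` with
invertible unit 2-cell `𝟙 X ⟶ R ≫ L`, and `𝟙 Y` is a left Kan extension of `R` along
itself, then `L` is left adjoint to `R` with counit the inverse of that 2-cell. -/
theorem adjunction_of_isKan_of_isIso_unit
    {B : Type u} [Bicategory.{w, v} B] {X Y : B}
    (R : X ⟶ Y) (t : LeftExtension R (𝟙 X)) (ht : t.IsKan) [IsIso t.unit]
    (hid : (LeftExtension.mk (𝟙 Y) (ρ_ R).inv).IsKan) :
    ∃ adj : Bicategory.Adjunction t.extension R, adj.counit = inv t.unit := by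
  set L := t.extension with hL
  set eps : R ≫ L ⟶ 𝟙 X := inv t.unit with hε
  have hεcomp : t.unit ≫ eps = 𝟙 _ := IsIso.hom_inv_id t.unit
  let s : LeftExtension R R :=
    .mk (L ≫ R) ((λ_ R).inv ≫ t.unit ▷ R ≫ (α_ R L R).hom)
  let η : 𝟙 Y ⟶ L ≫ R := hid.desc s
  have hfac : (ρ_ R).inv ≫ R ◁ η = (λ_ R).inv ≫ t.unit ▷ R ≫ (α_ R L R).hom :=
    hid.fac s
  have hfac' : R ◁ η = (ρ_ R).hom ≫ (λ_ R).inv ≫ t.unit ▷ R ≫ (α_ R L R).hom := by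
    rw [← hfac]; simp
  have left : leftZigzag η eps = (λ_ L).hom ≫ (ρ_ L).inv := by
    have key : (λ_ L).inv ≫ (η ▷ L ≫ (α_ L R L).hom ≫ L ◁ eps) ≫ (ρ_ L).hom = 𝟙 L := by
      apply ht.hom_ext
      calc t.unit ≫ R ◁ ((λ_ L).inv ≫ (η ▷ L ≫ (α_ L R L).hom ≫ L ◁ eps) ≫ (ρ_ L).hom)
          _ = 𝟙 _ ⊗≫ t.unit ⊗≫ (R ◁ η) ▷ L ⊗≫ R ◁ L ◁ eps ⊗≫ 𝟙 _ := by
            bicategory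
          _ = 𝟙 _ ⊗≫ t.unit ⊗≫ t.unit ▷ (R ≫ L) ⊗≫ (R ≫ L) ◁ eps ⊗≫ 𝟙 _ := by
            rw [hfac']; bicategory
          _ = 𝟙 _ ⊗≫ t.unit ⊗≫ (𝟙 X ◁ eps ≫ t.unit ▷ 𝟙 X) ⊗≫ 𝟙 _ := by
            rw [whisker_exchange]; bicategory
          _ = 𝟙 _ ⊗≫ (t.unit ≫ eps) ⊗≫ t.unit ⊗≫ 𝟙 _ := by
            bicategory
          _ = t.unit ≫ R ◁ 𝟙 L := by
            rw [hεcomp]; bicategory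
    calc leftZigzag η eps
        _ = (λ_ L).hom ≫ ((λ_ L).inv ≫ (η ▷ L ≫ (α_ L R L).hom ≫ L ◁ eps) ≫ (ρ_ L).hom)
              ≫ (ρ_ L).inv := by
          dsimp only [leftZigzag]; bicategory
        _ = (λ_ L).hom ≫ (ρ_ L).inv := by rw [key]; simp
  refine ⟨⟨η, eps, left, ?_⟩, rfl⟩
  calc rightZigzag η eps
      _ = 𝟙 _ ⊗≫ (R ◁ η) ⊗≫ eps ▷ R ⊗≫ 𝟙 _ := by
        dsimp only [rightZigzag]; bicategory
      _ = 𝟙 _ ⊗≫ (t.unit ≫ eps) ▷ R ⊗≫ 𝟙 _ := by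
        rw [hfac']; bicategory
      _ = (ρ_ R).hom ≫ (λ_ R).inv := by
        rw [hεcomp]; bicategory
end

section
/- Let C be a category with finite limits and let f : A → B be a morphism of equivalence groupoids in C. The homotopy class of f is a monomorphism in the homotopy category of equivalence groupoids if and only if the canonical map A₁ → A₀ ×_{B₀} B₁ ×_{B₀} A₀ is an isomorphism. -/
open CategoryTheory CategoryTheory.Limits

universe v u

variable (C : Type u) [Category.{v} C] [HasFiniteLimits C]

/-- An equivalence groupoid in `C`: a pair of objects with a monomorphism
`X₁ ⟶ X₀ ⨯ X₀` which is an internal equivalence relation. -/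
structure EqGpd where
  X₀ : C
  X₁ : C
  d₀ : X₁ ⟶ X₀
  d₁ : X₁ ⟶ X₀
  mono : Mono (prod.lift d₀ d₁)
  refl : ∀ (T : C) (x : T ⟶ X₀), ∃ h : T ⟶ X₁, h ≫ d₀ = x ∧ h ≫ d₁ = x
  symm : ∀ (T : C) (x y : T ⟶ X₀), (∃ h : T ⟶ X₁, h ≫ d₀ = x ∧ h ≫ d₁ = y) →
    ∃ h : T ⟶ X₁, h ≫ d₀ = y ∧ h ≫ d₁ = x
  trans : ∀ (T : C) (x y z : T ⟶ X₀),
    (∃ h : T ⟶ X₁, h ≫ d₀ = x ∧ h ≫ d₁ = y) →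
    (∃ h : T ⟶ X₁, h ≫ d₀ = y ∧ h ≫ d₁ = z) →
    ∃ h : T ⟶ X₁, h ≫ d₀ = x ∧ h ≫ d₁ = z

namespace EqGpd

variable {C}

/-- A morphism of equivalence groupoids. -/
@[ext]
structure Hom (A B : EqGpd C) where
  f₀ : A.X₀ ⟶ B.X₀
  f₁ : A.X₁ ⟶ B.X₁
  w₀ : f₁ ≫ B.d₀ = A.d₀ ≫ f₀
  w₁ : f₁ ≫ B.d₁ = A.d₁ ≫ f₀

instance : Category (EqGpd C) where
  Hom A B := Hom A B
  id A := ⟨𝟙 _, 𝟙 _, by simp, by simp⟩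
  comp {A B D} f g := ⟨f.f₀ ≫ g.f₀, f.f₁ ≫ g.f₁,
    by rw [Category.assoc, g.w₀, ← Category.assoc, f.w₀, Category.assoc],
    by rw [Category.assoc, g.w₁, ← Category.assoc, f.w₁, Category.assoc]⟩
  id_comp f := by apply Hom.ext <;> simp
  comp_id f := by apply Hom.ext <;> simp
  assoc f g h := by apply Hom.ext <;> simp

@[simp] lemma comp_f₀ {A B D : EqGpd C} (f : A ⟶ B) (g : B ⟶ D) :
    (f ≫ g).f₀ = f.f₀ ≫ g.f₀ := rfl

@[simp] lemma comp_f₁ {A B D : EqGpd C} (f : A ⟶ B) (g : B ⟶ D) :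
    (f ≫ g).f₁ = f.f₁ ≫ g.f₁ := rfl

@[simp] lemma id_f₀ (A : EqGpd C) : (𝟙 A : A ⟶ A).f₀ = 𝟙 A.X₀ := rfl

@[simp] lemma id_f₁ (A : EqGpd C) : (𝟙 A : A ⟶ A).f₁ = 𝟙 A.X₁ := rfl

/-- The homotopy relation on morphisms of equivalence groupoids. -/
def htpy : HomRel (EqGpd C) := fun {A B} f g =>
  ∃ h : A.X₀ ⟶ B.X₁, h ≫ B.d₀ = f.f₀ ∧ h ≫ B.d₁ = g.f₀

/-- The embedding of `C` into equivalence groupoids via diagonals. -/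
def disc : C ⥤ EqGpd C where
  obj X :=
    { X₀ := X
      X₁ := X
      d₀ := 𝟙 X
      d₁ := 𝟙 X
      mono := ⟨fun {Z} g h w => by
        calc g = (g ≫ prod.lift (𝟙 X) (𝟙 X)) ≫ prod.fst := by
              rw [Category.assoc, prod.lift_fst, Category.comp_id]
          _ = (h ≫ prod.lift (𝟙 X) (𝟙 X)) ≫ prod.fst := by
              exact congrArg (fun t => t ≫ prod.fst) w
          _ = h := by rw [Category.assoc, prod.lift_fst, Category.comp_id]⟩
      refl := fun T x => ⟨x, by simp, by simp⟩
      symm := fun T x y ⟨h, h0, h1⟩ => ⟨h, by simpa using h1, by simpa using h0⟩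
      trans := fun T x y z ⟨h, h0, h1⟩ ⟨k, k0, k1⟩ =>
        ⟨h, h0, by
          simp only [Category.comp_id] at h0 h1 k0 k1 ⊢
          rw [h1, ← k0]; exact k1⟩ }
  map {X Y} u := ⟨u, u, by simp, by simp⟩
  map_id X := by apply Hom.ext <;> simp
  map_comp f g := by apply Hom.ext <;> simp

end EqGpd


section Aux

open EqGpd

variable {C}

instance htpyCongruence : Congruence (EqGpd.htpy (C := C)) where
  equivalence := by
    intro A B
    constructor
    · intro f
      obtain ⟨h, h0, h1⟩ := B.refl A.X₀ f.f₀
      exact ⟨h, h0, h1⟩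
    · rintro f g ⟨h, h0, h1⟩
      obtain ⟨k, k0, k1⟩ := B.symm A.X₀ f.f₀ g.f₀ ⟨h, h0, h1⟩
      exact ⟨k, k0, k1⟩
    · rintro f g k ⟨h, h0, h1⟩ ⟨h', h0', h1'⟩
      obtain ⟨m, m0, m1⟩ := B.trans A.X₀ f.f₀ g.f₀ k.f₀ ⟨h, h0, h1⟩ ⟨h', h0', h1'⟩
      exact ⟨m, m0, m1⟩
  comp_left := by
    rintro X Y Z f g g' ⟨h, h0, h1⟩
    exact ⟨f.f₀ ≫ h, by rw [Category.assoc, h0]; rfl, by rw [Category.assoc, h1]; rfl⟩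
  comp_right := by
    rintro X Y Z f f' g ⟨h, h0, h1⟩
    refine ⟨h ≫ g.f₁, ?_, ?_⟩
    · rw [Category.assoc, g.w₀, ← Category.assoc, h0]; rfl
    · rw [Category.assoc, g.w₁, ← Category.assoc, h1]; rfl

/-- The key lifting property equivalent to both sides. -/
def LiftStar {A B : EqGpd C} (f : A ⟶ B) : Prop :=
  ∀ (T : C) (x y : T ⟶ A.X₀) (β : T ⟶ B.X₁),
    β ≫ B.d₀ = x ≫ f.f₀ → β ≫ B.d₁ = y ≫ f.f₀ →
      ∃ h : T ⟶ A.X₁, h ≫ A.d₀ = x ∧ h ≫ A.d₁ = y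

end Aux

/-- the homotopy class of a morphism `f : A ⟶ B` of equivalence groupoids
is a monomorphism in the homotopy category iff the canonical map
`A₁ ⟶ A₀ ×_{B₀} B₁ ×_{B₀} A₀` is an isomorphism. -/
theorem mono_in_homotopy_category_iff_isIso_canonical_map
    (A B : EqGpd C) (f : A ⟶ B) :
    Mono ((CategoryTheory.Quotient.functor (EqGpd.htpy (C := C))).map f) ↔
      IsIso ((pullback.lift (pullback.lift A.d₀ f.f₁ f.w₀.symm) A.d₁
          (by rw [← Category.assoc, pullback.lift_snd, f.w₁]) :
        A.X₁ ⟶ pullback (pullback.snd f.f₀ B.d₀ ≫ B.d₁) f.f₀)) := by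
  classical
  set c : A.X₁ ⟶ pullback (pullback.snd f.f₀ B.d₀ ≫ B.d₁) f.f₀ :=
    (pullback.lift (pullback.lift A.d₀ f.f₁ f.w₀.symm) A.d₁
      (by rw [← Category.assoc, pullback.lift_snd, f.w₁])) with hc
  -- basic equations for c
  have hcp : c ≫ pullback.fst _ _ ≫ pullback.fst _ _ = A.d₀ := by
    rw [hc, pullback.lift_fst_assoc, pullback.lift_fst]
  have hcm : c ≫ pullback.fst _ _ ≫ pullback.snd _ _ = f.f₁ := by
    rw [hc, pullback.lift_fst_assoc, pullback.lift_snd]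
  have hcq : c ≫ pullback.snd _ _ = A.d₁ := by
    rw [hc, pullback.lift_snd]
  -- c is a mono
  have monoc : Mono c := by
    have heq : c ≫ prod.lift (pullback.fst _ _ ≫ pullback.fst _ _) (pullback.snd _ _)
        = prod.lift A.d₀ A.d₁ := by
      apply Limits.prod.hom_ext <;> simp [hcp, hcq]
    haveI := A.mono
    exact mono_of_mono_fac heq
  constructor
  · intro hmono
    -- first derive LiftStar from mononess
    have star : LiftStar f := by
      intro T x y β hβ₀ hβ₁
      obtain ⟨rx, rx0, rx1⟩ := A.refl T x
      obtain ⟨ry, ry0, ry1⟩ := A.refl T y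
      let g : (EqGpd.disc (C := C)).obj T ⟶ A := ⟨x, rx, by simpa [EqGpd.disc] using rx0, by simpa [EqGpd.disc] using rx1⟩
      let h : (EqGpd.disc (C := C)).obj T ⟶ A := ⟨y, ry, by simpa [EqGpd.disc] using ry0, by simpa [EqGpd.disc] using ry1⟩
      have hgh : (CategoryTheory.Quotient.functor (EqGpd.htpy (C := C))).map (g ≫ f)
          = (CategoryTheory.Quotient.functor (EqGpd.htpy (C := C))).map (h ≫ f) := by
        rw [CategoryTheory.Quotient.functor_map_eq_iff]
        exact ⟨β, hβ₀, hβ₁⟩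
      rw [Functor.map_comp, Functor.map_comp] at hgh
      have := hmono.right_cancellation _ _ hgh
      rw [CategoryTheory.Quotient.functor_map_eq_iff] at this
      obtain ⟨H, H0, H1⟩ := this
      exact ⟨H, H0, H1⟩
    -- use Star to construct an inverse of c
    obtain ⟨s, s0, s1⟩ := star (pullback (pullback.snd f.f₀ B.d₀ ≫ B.d₁) f.f₀)
      (pullback.fst _ _ ≫ pullback.fst _ _) (pullback.snd _ _)
      (pullback.fst _ _ ≫ pullback.snd _ _)
      (by rw [Category.assoc, Category.assoc, ← pullback.condition])
      (by rw [Category.assoc, pullback.condition])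
    have hsc : s ≫ c = 𝟙 _ := by
      apply pullback.hom_ext
      · apply pullback.hom_ext
        · simp only [Category.assoc, Category.id_comp]
          rw [hcp, s0]
        · simp only [Category.assoc, Category.id_comp]
          rw [hcm]
          -- need s ≫ f.f₁ = pullback.fst ≫ pullback.snd
          have hB := B.mono
          rw [← cancel_mono (prod.lift B.d₀ B.d₁)]
          apply Limits.prod.hom_ext
          · simp only [Category.assoc, prod.lift_fst]
            rw [f.w₀, ← Category.assoc, s0, Category.assoc, pullback.condition]
          · simp only [Category.assoc, prod.lift_snd]
            rw [f.w₁, ← Category.assoc, s1, pullback.condition]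
      · simp only [Category.assoc, Category.id_comp]
        rw [hcq, s1]
    have hcs : c ≫ s = 𝟙 _ := by
      rw [← cancel_mono c, Category.assoc, hsc, Category.comp_id, Category.id_comp]
    exact ⟨s, hcs, hsc⟩
  · intro hiso
    -- derive LiftStar from iso
    have star : LiftStar f := by
      intro T x y β hβ₀ hβ₁
      let t : T ⟶ pullback (pullback.snd f.f₀ B.d₀ ≫ B.d₁) f.f₀ :=
        pullback.lift (pullback.lift x β hβ₀.symm) y
          (by rw [← Category.assoc, pullback.lift_snd, hβ₁])
      refine ⟨t ≫ inv c, ?_, ?_⟩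
      · rw [← hcp]
        simp only [Category.assoc, IsIso.inv_hom_id_assoc]
        simp [t]
        rw [pullback.lift_fst_assoc, pullback.lift_fst]
      · rw [← hcq]
        simp only [Category.assoc, IsIso.inv_hom_id_assoc]
        simp [t]
        rw [pullback.lift_snd]
    -- derive mono from Star
    constructor
    intro Z a b hab
    obtain ⟨a', rfl⟩ := (CategoryTheory.Quotient.full_functor (EqGpd.htpy (C := C))).map_surjective a
    obtain ⟨b', rfl⟩ := (CategoryTheory.Quotient.full_functor (EqGpd.htpy (C := C))).map_surjective b
    rw [← Functor.map_comp, ← Functor.map_comp,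
      CategoryTheory.Quotient.functor_map_eq_iff] at hab
    obtain ⟨H, H0, H1⟩ := hab
    rw [CategoryTheory.Quotient.functor_map_eq_iff]
    obtain ⟨K, K0, K1⟩ := star _ a'.f₀ b'.f₀ H (by simpa using H0) (by simpa using H1)
    exact ⟨K, K0, K1⟩
end

section
/- Let C be a category with finite limits. For any object X of C, the functor Hom(X, -) from the homotopy category of equivalence 2-groupoids E_h^{(2)}(C) to Set sends the coequalizer of the two projections A₁ ⇉ A₀ of an equivalence 2-groupoid A to the quotient of Hom(X, A₀) by the equivalence relation 'f ~ g iff (f,g) : X → A₀ × A₀ factors through A₁'. -/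
open CategoryTheory CategoryTheory.Limits

universe v u

variable (C : Type u) [Category.{v} C] [HasFiniteLimits C]

/-- An equivalence 2-groupoid in `C`: a 1-coskeletal Kan simplicial object, presented
by a reflexive graph `X₁ ⇉ X₀` with sections of the three horn-filling maps
`A(∂Δ[2]) ⟶ A(Λⁱ[2])`. -/
structure EqTwoGpd where
  X₀ : C
  X₁ : C
  d₀ : X₁ ⟶ X₀
  d₁ : X₁ ⟶ X₀
  σ : X₀ ⟶ X₁
  σd₀ : σ ≫ d₀ = 𝟙 X₀
  σd₁ : σ ≫ d₁ = 𝟙 X₀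
  horn₁ : ∃ m : pullback d₁ d₀ ⟶ X₁,
    m ≫ d₀ = pullback.fst d₁ d₀ ≫ d₀ ∧ m ≫ d₁ = pullback.snd d₁ d₀ ≫ d₁
  horn₀ : ∃ m : pullback d₀ d₀ ⟶ X₁,
    m ≫ d₀ = pullback.fst d₀ d₀ ≫ d₁ ∧ m ≫ d₁ = pullback.snd d₀ d₀ ≫ d₁
  horn₂ : ∃ m : pullback d₁ d₁ ⟶ X₁,
    m ≫ d₀ = pullback.fst d₁ d₁ ≫ d₀ ∧ m ≫ d₁ = pullback.snd d₁ d₁ ≫ d₀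

namespace EqTwoGpd

variable {C}

/-- A morphism of equivalence 2-groupoids. -/
@[ext]
structure Hom (A B : EqTwoGpd C) where
  f₀ : A.X₀ ⟶ B.X₀
  f₁ : A.X₁ ⟶ B.X₁
  w₀ : f₁ ≫ B.d₀ = A.d₀ ≫ f₀
  w₁ : f₁ ≫ B.d₁ = A.d₁ ≫ f₀

instance : Category (EqTwoGpd C) where
  Hom A B := Hom A B
  id A := ⟨𝟙 _, 𝟙 _, by simp, by simp⟩
  comp {A B D} f g := ⟨f.f₀ ≫ g.f₀, f.f₁ ≫ g.f₁,
    by rw [Category.assoc, g.w₀, ← Category.assoc, f.w₀, Category.assoc],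
    by rw [Category.assoc, g.w₁, ← Category.assoc, f.w₁, Category.assoc]⟩
  id_comp f := by apply Hom.ext <;> simp
  comp_id f := by apply Hom.ext <;> simp
  assoc f g h := by apply Hom.ext <;> simp

/-- The homotopy relation on morphisms of equivalence 2-groupoids. -/
def htpy : HomRel (EqTwoGpd C) := fun {A B} f g =>
  ∃ h : A.X₀ ⟶ B.X₁, h ≫ B.d₀ = f.f₀ ∧ h ≫ B.d₁ = g.f₀

@[simp] lemma comp_f₀ {A B D : EqTwoGpd C} (f : A ⟶ B) (g : B ⟶ D) :
    (f ≫ g).f₀ = f.f₀ ≫ g.f₀ := rfl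

@[simp] lemma comp_f₁ {A B D : EqTwoGpd C} (f : A ⟶ B) (g : B ⟶ D) :
    (f ≫ g).f₁ = f.f₁ ≫ g.f₁ := rfl

@[simp] lemma id_f₀ (A : EqTwoGpd C) : (𝟙 A : A ⟶ A).f₀ = 𝟙 A.X₀ := rfl

@[simp] lemma id_f₁ (A : EqTwoGpd C) : (𝟙 A : A ⟶ A).f₁ = 𝟙 A.X₁ := rfl

/-- The constant equivalence 2-groupoid on an object of `C`. -/
def discObj (X : C) : EqTwoGpd C where
  X₀ := X
  X₁ := X
  d₀ := 𝟙 X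
  d₁ := 𝟙 X
  σ := 𝟙 X
  σd₀ := by simp
  σd₁ := by simp
  horn₁ := ⟨pullback.fst (𝟙 X) (𝟙 X), by simp,
    by simpa using pullback.condition (f := 𝟙 X) (g := 𝟙 X)⟩
  horn₀ := ⟨pullback.fst (𝟙 X) (𝟙 X), by simp,
    by simpa using pullback.condition (f := 𝟙 X) (g := 𝟙 X)⟩
  horn₂ := ⟨pullback.fst (𝟙 X) (𝟙 X), by simp,
    by simpa using pullback.condition (f := 𝟙 X) (g := 𝟙 X)⟩

@[simp] lemma discObj_d₀ (X : C) : (discObj X).d₀ = 𝟙 X := rfl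
@[simp] lemma discObj_d₁ (X : C) : (discObj X).d₁ = 𝟙 X := rfl
@[simp] lemma discObj_X₀ (X : C) : (discObj X).X₀ = X := rfl
@[simp] lemma discObj_X₁ (X : C) : (discObj X).X₁ = X := rfl

/-- The embedding of `C` into equivalence 2-groupoids as constant objects. -/
def disc : C ⥤ EqTwoGpd C where
  obj X := discObj X
  map {X Y} u := ⟨u, u, by simp, by simp⟩
  map_id X := by apply Hom.ext <;> simp
  map_comp f g := by apply Hom.ext <;> simp

/-- The level-0 projection `A₁ ⟶ A₀` as a morphism of constant 2-groupoids. -/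
def proj₀ (A : EqTwoGpd C) : discObj A.X₁ ⟶ discObj A.X₀ :=
  ⟨A.d₀, A.d₀, by simp, by simp⟩

/-- The level-1 projection `A₁ ⟶ A₀` as a morphism of constant 2-groupoids. -/
def proj₁ (A : EqTwoGpd C) : discObj A.X₁ ⟶ discObj A.X₀ :=
  ⟨A.d₁, A.d₁, by simp, by simp⟩

/-- A morphism `X ⟶ A₀` in `C`, as a morphism of constant 2-groupoids. -/
def discHom {X Y : C} (u : X ⟶ Y) : discObj X ⟶ discObj Y :=
  ⟨u, u, by simp, by simp⟩

end EqTwoGpd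

open EqTwoGpd

namespace EqTwoGpd

variable {C}

lemma htpy_of_f₀_eq {A B : EqTwoGpd C} {f g : A ⟶ B} (h : f.f₀ = g.f₀) : htpy f g :=
  ⟨f.f₀ ≫ B.σ, by rw [Category.assoc, B.σd₀, Category.comp_id],
    by rw [Category.assoc, B.σd₁, Category.comp_id, h]⟩

instance : Congruence (htpy (C := C)) where
  equivalence := by
    refine ⟨fun f => htpy_of_f₀_eq rfl, ?_, ?_⟩
    · intro f g hfg
      obtain ⟨h, h0, h1⟩ := hfg
      obtain ⟨m, m0, m1⟩ := ‹EqTwoGpd C›.horn₀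
      refine ⟨pullback.lift h (f.f₀ ≫ ‹EqTwoGpd C›.σ) ?_ ≫ m, ?_, ?_⟩
      · rw [h0, Category.assoc, EqTwoGpd.σd₀, Category.comp_id]
      · rw [Category.assoc, m0, ← Category.assoc, pullback.lift_fst, h1]
      · rw [Category.assoc, m1, ← Category.assoc, pullback.lift_snd, Category.assoc,
          EqTwoGpd.σd₁, Category.comp_id]
    · intro f g k h₁ h₂
      obtain ⟨h, h0, h1⟩ := h₁
      obtain ⟨h', h0', h1'⟩ := h₂
      obtain ⟨m, m0, m1⟩ := ‹EqTwoGpd C›.horn₁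
      refine ⟨pullback.lift h h' (h1.trans h0'.symm) ≫ m, ?_, ?_⟩
      · rw [Category.assoc, m0, ← Category.assoc, pullback.lift_fst, h0]
      · rw [Category.assoc, m1, ← Category.assoc, pullback.lift_snd, h1']
  comp_left := by
    intro A B D a f g hfg
    obtain ⟨h, h0, h1⟩ := hfg
    exact ⟨a.f₀ ≫ h, by rw [Category.assoc, h0, comp_f₀],
      by rw [Category.assoc, h1, comp_f₀]⟩
  comp_right := by
    intro A B D f g b hfg
    obtain ⟨h, h0, h1⟩ := hfg
    refine ⟨h ≫ b.f₁, ?_, ?_⟩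
    · rw [Category.assoc, b.w₀, ← Category.assoc, h0, comp_f₀]
    · rw [Category.assoc, b.w₁, ← Category.assoc, h1, comp_f₀]

/-- The counit `disc A₀ ⟶ A`. -/
def counit (A : EqTwoGpd C) : discObj A.X₀ ⟶ A :=
  ⟨𝟙 _, A.σ, by simp [A.σd₀], by simp [A.σd₁]⟩

@[simp] lemma counit_f₀ (A : EqTwoGpd C) : (counit A).f₀ = 𝟙 A.X₀ := rfl

/-- Abbreviation for the quotient functor. -/
abbrev Qf : EqTwoGpd C ⥤ CategoryTheory.Quotient (htpy (C := C)) :=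
  CategoryTheory.Quotient.functor (htpy (C := C))

/-- The canonical cofork on `proj₀, proj₁` in the homotopy category with point `A`. -/
noncomputable def myCofork (A : EqTwoGpd C) :
    Cofork (Qf.map (proj₀ A)) (Qf.map (proj₁ A)) :=
  Cofork.ofπ (Qf.map (counit A)) (by
    rw [← Functor.map_comp, ← Functor.map_comp]
    exact CategoryTheory.Quotient.sound _
      ⟨𝟙 A.X₁, by simp [proj₀], by simp [proj₁]⟩)

@[simp] lemma myCofork_π (A : EqTwoGpd C) : (myCofork A).π = Qf.map (counit A) := rfl

/-- A lift of the cofork map `s.π` to an actual morphism of 2-groupoids. -/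
noncomputable def sLift (A : EqTwoGpd C)
    (s : Cofork (Qf.map (proj₀ A)) (Qf.map (proj₁ A))) : discObj A.X₀ ⟶ s.pt.as :=
  (Qf.map_surjective s.π).choose

@[simp] lemma sLift_spec (A : EqTwoGpd C)
    (s : Cofork (Qf.map (proj₀ A)) (Qf.map (proj₁ A))) : Qf.map (sLift A s) = s.π :=
  (Qf.map_surjective s.π).choose_spec

lemma sLift_htpy (A : EqTwoGpd C)
    (s : Cofork (Qf.map (proj₀ A)) (Qf.map (proj₁ A))) :
    htpy (proj₀ A ≫ sLift A s) (proj₁ A ≫ sLift A s) := by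
  apply (Quotient.functor_map_eq_iff (htpy (C := C)) _ _).mp
  rw [Functor.map_comp, Functor.map_comp, sLift_spec]
  exact s.condition

/-- The descended morphism `A ⟶ s.pt.as`. -/
noncomputable def descMor (A : EqTwoGpd C)
    (s : Cofork (Qf.map (proj₀ A)) (Qf.map (proj₁ A))) : A ⟶ s.pt.as :=
  ⟨(sLift A s).f₀, (sLift_htpy A s).choose, (sLift_htpy A s).choose_spec.1,
    (sLift_htpy A s).choose_spec.2⟩

lemma descMor_htpy (A : EqTwoGpd C)
    (s : Cofork (Qf.map (proj₀ A)) (Qf.map (proj₁ A))) :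
    htpy (counit A ≫ descMor A s) (sLift A s) :=
  htpy_of_f₀_eq (by simp [counit, descMor]; exact Category.id_comp _)

/-- `myCofork` is a colimit. -/
noncomputable def myCoforkIsColimit (A : EqTwoGpd C) : IsColimit (myCofork A) :=
  Cofork.IsColimit.mk _ (fun s => Qf.map (descMor A s))
    (fun s => by
      show Qf.map (counit A) ≫ Qf.map (descMor A s) = s.π
      rw [← Functor.map_comp,
        CategoryTheory.Quotient.sound _ (descMor_htpy A s), sLift_spec])
    (fun s m w => by
      obtain ⟨k, hk⟩ := Qf.map_surjective m
      have hw : Qf.map (counit A ≫ k) = Qf.map (sLift A s) := by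
        rw [Functor.map_comp, hk, sLift_spec]
        exact w
      obtain ⟨h, h0, h1⟩ := (Quotient.functor_map_eq_iff (htpy (C := C)) _ _).mp hw
      rw [← hk]
      exact CategoryTheory.Quotient.sound _
        ⟨h, by simpa [counit] using h0, h1⟩)

end EqTwoGpd

/-- for any `X : C`, the functor `Hom(X, -)` on the homotopy category
`E_h^{(2)}(C)` of equivalence 2-groupoids sends the coequalizer of the two projections
`A₁ ⇉ A₀` of an equivalence 2-groupoid `A` to the quotient of `Hom(X, A₀)` by the
relation `u ~ v iff (u, v) : X ⟶ A₀ × A₀ factors through A₁`. -/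
theorem hom_functor_preserves_coequalizer_of_two_groupoid
    (X : C) (A : EqTwoGpd C)
    (c : Cofork ((CategoryTheory.Quotient.functor (htpy (C := C))).map (proj₀ A))
      ((CategoryTheory.Quotient.functor (htpy (C := C))).map (proj₁ A)))
    (hc : IsColimit c) :
    Function.Surjective (fun u : X ⟶ A.X₀ =>
      (CategoryTheory.Quotient.functor (htpy (C := C))).map (discHom u) ≫ c.π) ∧
    ∀ u v : X ⟶ A.X₀,
      ((CategoryTheory.Quotient.functor (htpy (C := C))).map (discHom u) ≫ c.π =
        (CategoryTheory.Quotient.functor (htpy (C := C))).map (discHom v) ≫ c.π ↔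
      ∃ h : X ⟶ A.X₁, h ≫ A.d₀ = u ∧ h ≫ A.d₁ = v) := by
  classical
  let e : c.pt ≅ (myCofork A).pt :=
    hc.coconePointUniqueUpToIso (myCoforkIsColimit A)
  have hπ : c.π ≫ e.hom = (myCofork A).π :=
    hc.comp_coconePointUniqueUpToIso_hom (myCoforkIsColimit A) WalkingParallelPair.one
  have hπ' : c.π = (myCofork A).π ≫ e.inv := by
    rw [← hπ, Category.assoc, e.hom_inv_id]
    exact (Category.comp_id _).symm
  have key : ∀ u : X ⟶ A.X₀,
      Qf.map (discHom u) ≫ c.π = Qf.map (discHom u ≫ counit A) ≫ e.inv := by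
    intro u
    rw [hπ', myCofork_π, Functor.map_comp]
    exact (Category.assoc _ _ _).symm
  constructor
  · intro w
    obtain ⟨k, hk⟩ := Qf.map_surjective (w ≫ e.hom)
    refine ⟨k.f₀, ?_⟩
    have : Qf.map (discHom k.f₀ ≫ counit A) = Qf.map k :=
      CategoryTheory.Quotient.sound _ (htpy_of_f₀_eq (by simp [discHom, counit]; exact Category.comp_id _))
    show Qf.map (discHom k.f₀) ≫ c.π = w
    exact (key k.f₀).trans ((congrArg (· ≫ e.inv) this).trans
      (by rw [hk]; exact (Category.assoc _ _ _).trans ((congrArg (w ≫ ·) e.hom_inv_id).trans (Category.comp_id _))))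
  · intro u v
    rw [key, key]
    refine (cancel_mono (f := e.inv) (g := Qf.map (discHom u ≫ counit A))
      (h := Qf.map (discHom v ≫ counit A))).trans ?_
    refine (Quotient.functor_map_eq_iff (htpy (C := C)) _ _).trans ?_
    constructor
    · rintro ⟨h, h0, h1⟩
      exact ⟨h, by simpa [discHom, counit] using h0, by simpa [discHom, counit] using h1⟩
    · rintro ⟨h, h0, h1⟩
      exact ⟨h, by simpa [discHom, counit] using h0, by simpa [discHom, counit] using h1⟩
end
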